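/- Let (ν, P, P̃, U) ∈ K_d, let θ̃ be a nonzero complex number, R = θ̃ P̃ Uᵗ, and φ̃_i = R φ_i R^{-1}. Then for every i = 1, 2, ..., d one has the matrix identity φ̃_i = ν ∑_{0 ≤ k ≠ l ≤ d} p_i p̃_k u_{i,k} u_{i,l} e_{k,l} + ∑_{j=1}^{d} p_i (ν p̃_j u_{i,j}² − 1) φ_j. -/

import Mathlib

open Matrix Finset

theorem stmt_2 (d : ℕ) (hd : 1 ≤ d) (ν : ℂ) (hν : ν ≠ 0)
    (p pt : Fin (d+1) → ℂ) (U : Matrix (Fin (d+1)) (Fin (d+1)) ℂ)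
    (hp0 : p 0 = 1/ν) (hpt0 : pt 0 = 1/ν)
    (hU : ∀ j, U 0 j = 1 ∧ U j 0 = 1)
    (hK : ν • (Matrix.diagonal p * U * Matrix.diagonal pt * U.transpose) = 1)
    (θt : ℂ) (hθt : θt ≠ 0) (R : Matrix (Fin (d+1)) (Fin (d+1)) ℂ)
    (hR : R = θt • (Matrix.diagonal pt * U.transpose))
    (e : Fin (d+1) → Fin (d+1) → Matrix (Fin (d+1)) (Fin (d+1)) ℂ)
    (he : ∀ i j, e i j = Matrix.single i j 1)
    (φ : Fin (d+1) → Matrix (Fin (d+1)) (Fin (d+1)) ℂ)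
    (hφ : ∀ i, φ i = e i i - (((d : ℂ) + 1)⁻¹) • 1)
    (φt : Fin (d+1) → Matrix (Fin (d+1)) (Fin (d+1)) ℂ)
    (hφt : ∀ i, φt i = R * φ i * R⁻¹) :
    ∀ i : Fin (d+1), i ≠ 0 →
      φt i = ν • (∑ k : Fin (d+1), ∑ l ∈ Finset.univ.erase k,
          (p i * pt k * U i k * U i l) • e k l)
        + ∑ j ∈ Finset.univ.erase (0 : Fin (d+1)),
            (p i * (ν * pt j * (U i j)^2 - 1)) • φ j := by
  intro i hi
  -- inverse of R
  have h1 : (ν • (Matrix.diagonal p * U)) * (Matrix.diagonal pt * U.transpose) = 1 := by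
    simp only [Matrix.smul_mul, Matrix.mul_assoc] at hK ⊢
    exact hK
  have h2 := mul_eq_one_comm.mp h1
  have hRinv : R⁻¹ = (θt⁻¹ * ν) • (Matrix.diagonal p * U) := by
    apply Matrix.inv_eq_right_inv
    rw [hR, Matrix.smul_mul, Matrix.mul_smul, smul_smul,
      show θt * (θt⁻¹ * ν) = ν by field_simp]
    rw [Matrix.mul_smul] at h2
    exact h2
  have hRR : R * R⁻¹ = 1 := by
    rw [hRinv, hR, Matrix.smul_mul, Matrix.mul_smul, smul_smul,
      show θt * (θt⁻¹ * ν) = ν by field_simp]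
    rw [Matrix.mul_smul] at h2
    exact h2
  -- hK entrywise at (i,i)
  have hdiag : ν * ∑ j, p i * U i j * pt j * U i j = 1 := by
    have := congrFun (congrFun hK i) i
    simpa [Matrix.mul_apply, Matrix.diagonal, Matrix.one_apply, Finset.mul_sum,
      mul_comm, mul_assoc, mul_left_comm] using this
  have h00 : ν * pt 0 * (U i 0)^2 = 1 := by
    rw [hpt0, (hU i).2]; field_simp
  have hsum : ∑ j ∈ Finset.univ.erase (0 : Fin (d+1)), p i * (ν * pt j * (U i j)^2 - 1)
      = 1 - ((d:ℂ)+1) * p i := by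
    rw [Finset.sum_erase_eq_sub (Finset.mem_univ _), h00]
    have e1 : ∑ j, p i * (ν * pt j * (U i j)^2 - 1)
        = (ν * ∑ j, p i * U i j * pt j * U i j) - ((d:ℂ)+1) * p i := by
      rw [Finset.mul_sum]
      rw [show ((d:ℂ)+1) * p i = ∑ _j : Fin (d+1), p i by
        simp [Finset.sum_const, Finset.card_univ]]
      rw [← Finset.sum_sub_distrib]
      exact Finset.sum_congr rfl (fun j _ => by ring)
    rw [e1, hdiag]; ring
  have hsplit : φt i = R * Matrix.single i i (1:ℂ) * R⁻¹ - (((d:ℂ)+1)⁻¹) • 1 := by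
    rw [hφt, hφ, he, Matrix.mul_sub, Matrix.sub_mul, Matrix.mul_smul, Matrix.mul_one,
      Matrix.smul_mul, hRR]
  have hlhs : ∀ k l, (R * Matrix.single i i (1:ℂ) * R⁻¹) k l
      = ν * p i * pt k * U i k * U i l := by
    intro k l
    have : (R * Matrix.single i i (1:ℂ) * R⁻¹) k l = R k i * R⁻¹ i l := by
      rw [Matrix.mul_apply]
      simp [Matrix.mul_apply, Matrix.single, Matrix.of_apply, ite_and,
        Finset.mul_sum, Finset.sum_mul, mul_ite, ite_mul, Finset.sum_ite_eq,
        Finset.sum_ite_eq']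
    rw [this, hRinv, hR]
    simp [Matrix.smul_apply, Matrix.mul_apply, Matrix.diagonal, Finset.mul_sum,
      mul_ite, ite_mul, Finset.sum_ite_eq, Matrix.transpose_apply]
    field_simp
  have hfirst : ∀ k l : Fin (d+1),
      (∑ k' : Fin (d+1), ∑ l' ∈ Finset.univ.erase k',
        (p i * pt k' * U i k' * U i l') • Matrix.single k' l' (1:ℂ)) k l
      = if k = l then 0 else p i * pt k * U i k * U i l := by
    intro k l
    rw [Matrix.sum_apply]
    rw [Finset.sum_eq_single k]
    · rw [Matrix.sum_apply]
      simp only [Matrix.smul_apply, Matrix.single, Matrix.of_apply, smul_eq_mul,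
        mul_ite, mul_one, mul_zero, eq_self_iff_true, true_and]
      rw [Finset.sum_ite_eq' (Finset.univ.erase k) l
        (fun l' => p i * pt k * U i k * U i l')]
      by_cases hkl : k = l
      · simp [hkl]
      · simp [Finset.mem_erase, Ne.symm hkl, hkl]
    · intro b _ hb
      rw [Matrix.sum_apply]
      refine Finset.sum_eq_zero (fun l' _ => ?_)
      simp [Matrix.single, hb]
    · simp
  have hsum' : ∑ j ∈ Finset.univ.erase (0 : Fin (d+1)),
      (p i * (ν * pt j * (U i j)^2) - p i) = 1 - ((d:ℂ)+1) * p i := by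
    rw [← hsum]; exact Finset.sum_congr rfl (fun j _ => by ring)
  have hsec : ∀ k l : Fin (d+1),
      (∑ j ∈ Finset.univ.erase (0:Fin (d+1)),
        (p i * (ν * pt j * (U i j)^2 - 1)) •
          (Matrix.single j j (1:ℂ)
            - (((d:ℂ)+1)⁻¹) • (1 : Matrix (Fin (d+1)) (Fin (d+1)) ℂ))) k l
      = (if k = l ∧ k ≠ 0 then p i * (ν * pt k * (U i k)^2 - 1) else 0)
        - (if k = l then (((d:ℂ)+1)⁻¹) * (1 - ((d:ℂ)+1) * p i) else 0) := by
    intro k l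
    simp only [Matrix.sum_apply, Matrix.smul_apply, Matrix.sub_apply, Matrix.one_apply,
      Matrix.single, Matrix.of_apply, smul_eq_mul, mul_sub]
    rw [Finset.sum_sub_distrib]
    congr 1
    · by_cases hkl : k = l
      · subst hkl
        simp only [and_self]
        simp only [mul_ite, ite_mul, mul_one, mul_zero, one_mul, zero_mul]
        rw [Finset.sum_ite_eq' (Finset.univ.erase (0:Fin (d+1))) k
          (fun j => p i * (ν * pt j * (U i j)^2) - p i)]
        simp [Finset.mem_erase]
      · have h' : ∀ j : Fin (d+1), ¬ (j = k ∧ j = l) := by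
          rintro j ⟨rfl, rfl⟩; exact hkl rfl
        simp [h', hkl]
    · by_cases hkl : k = l
      · simp only [hkl, eq_self_iff_true, if_true, ite_true, mul_one]
        rw [← Finset.sum_mul, hsum']
        ring
      · simp [hkl]
  have hd1 : ((d:ℂ)+1) ≠ 0 := Nat.cast_add_one_ne_zero d
  have hcancel : ((d:ℂ)+1)⁻¹ * (((d:ℂ)+1) * p i) = p i := by
    rw [← mul_assoc, inv_mul_cancel₀ hd1, one_mul]
  -- assemble
  rw [hsplit]
  simp only [he, hφ]
  ext k l
  rw [Matrix.add_apply, Matrix.smul_apply, hfirst, hsec, Matrix.sub_apply,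
    Matrix.smul_apply, Matrix.one_apply, hlhs]
  by_cases hkl : k = l
  · subst hkl
    by_cases hk0 : k = 0
    · subst hk0
      simp only [eq_self_iff_true, if_true, ite_true, ne_eq, not_true, and_false, if_false,
        ite_false, smul_eq_mul, mul_zero, smul_zero, mul_one]
      rw [mul_sub (((d:ℂ)+1)⁻¹), hcancel, mul_one]
      linear_combination p i * h00
    · simp only [eq_self_iff_true, if_true, ite_true, ne_eq, hk0, not_false_iff, and_self,
        true_and, smul_eq_mul, mul_zero, smul_zero, mul_one]
      rw [mul_sub (((d:ℂ)+1)⁻¹), hcancel, mul_one]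
      ring
  · simp only [hkl, if_false, ite_false, false_and, smul_eq_mul, mul_zero, smul_zero]
    ring
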